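/- arXiv:math/0304248 — 2 statements merged into one kernel-verified Lean document; each statement's English description precedes it below -/
import Mathlib

section
/- With 0 < n₁, ρ ≠ 0, C_z > 0, and δ₀₀₄ - δ₀₀₃² - 1 > 0, the difference min Var(ρ̂_hd) - min Var(ρ̂_td) = (ρ²/n₁)[D²/(4C_z²) + ((D/C_z)δ₀₀₃ - F)²/(4(δ₀₀₄ - δ₀₀₃² - 1))] is nonnegative; it is strictly positive whenever D ≠ 0 or (D/C_z)δ₀₀₃ ≠ F. -/
theorem stmt_5 (D F Cz δ003 δ004 ρ : ℝ) (n₁ : ℕ) (hn₁ : 0 < n₁)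
    (hρ : ρ ≠ 0) (hC : Cz > 0) (hδ : δ004 - δ003 ^ 2 - 1 > 0) :
    0 ≤ (ρ ^ 2 / (n₁ : ℝ)) *
        (D ^ 2 / (4 * Cz ^ 2) + ((D / Cz) * δ003 - F) ^ 2 / (4 * (δ004 - δ003 ^ 2 - 1))) ∧
    ((D ≠ 0 ∨ (D / Cz) * δ003 ≠ F) →
      0 < (ρ ^ 2 / (n₁ : ℝ)) *
        (D ^ 2 / (4 * Cz ^ 2) + ((D / Cz) * δ003 - F) ^ 2 / (4 * (δ004 - δ003 ^ 2 - 1)))) := by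
  have hn : (0:ℝ) < (n₁ : ℝ) := by exact_mod_cast hn₁
  have hρ2 : (0:ℝ) < ρ ^ 2 / (n₁ : ℝ) := by positivity
  have h1 : 0 ≤ D ^ 2 / (4 * Cz ^ 2) := by positivity
  have h2 : 0 ≤ ((D / Cz) * δ003 - F) ^ 2 / (4 * (δ004 - δ003 ^ 2 - 1)) := by positivity
  constructor
  · positivity
  · rintro (hD | hF)
    · have : 0 < D ^ 2 / (4 * Cz ^ 2) := by positivity
      have := add_pos_of_pos_of_nonneg this h2
      positivity
    · have h3 : (D / Cz) * δ003 - F ≠ 0 := sub_ne_zero.mpr hF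
      have : 0 < ((D / Cz) * δ003 - F) ^ 2 / (4 * (δ004 - δ003 ^ 2 - 1)) := by positivity
      have := add_pos_of_nonneg_of_pos h1 this
      positivity
end

section
/- Let X : Fin N → ℝ with N ≥ 2, mean X̄ = (1/N)∑Xᵢ, central moments μ_k = (1/N)∑(Xᵢ - X̄)^k, and suppose μ₂ > 0. Define the standardized moments δ₃ = μ₃/μ₂^{3/2} and δ₄ = μ₄/μ₂². Then δ₄ ≥ δ₃² + 1. -/
theorem stmt_6 (N : ℕ) (hN : 2 ≤ N) (X : Fin N → ℝ)
    (Xbar μ₂ μ₃ μ₄ : ℝ)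
    (hXbar : Xbar = (1 / (N : ℝ)) * ∑ i, X i)
    (hμ₂ : μ₂ = (1 / (N : ℝ)) * ∑ i, (X i - Xbar) ^ 2)
    (hμ₃ : μ₃ = (1 / (N : ℝ)) * ∑ i, (X i - Xbar) ^ 3)
    (hμ₄ : μ₄ = (1 / (N : ℝ)) * ∑ i, (X i - Xbar) ^ 4)
    (hpos : μ₂ > 0) :
    μ₃ ^ 2 / μ₂ ^ 3 + 1 ≤ μ₄ / μ₂ ^ 2 := by
  have hN0 : (0:ℝ) < (N : ℝ) := by
    have : 0 < N := by omega
    exact_mod_cast this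
  set a : ℝ := μ₃ / μ₂ with ha
  have hsum0 : ∑ i, (X i - Xbar) = 0 := by
    rw [Finset.sum_sub_distrib, Finset.sum_const, Finset.card_fin, hXbar]
    rw [nsmul_eq_mul]; field_simp; ring
  have hS2 : ∑ i, (X i - Xbar) ^ 2 = N * μ₂ := by rw [hμ₂]; field_simp
  have hS3 : ∑ i, (X i - Xbar) ^ 3 = N * μ₃ := by rw [hμ₃]; field_simp
  have hS4 : ∑ i, (X i - Xbar) ^ 4 = N * μ₄ := by rw [hμ₄]; field_simp
  have key : (0:ℝ) ≤ ∑ i, ((X i - Xbar) ^ 2 - a * (X i - Xbar) - μ₂) ^ 2 :=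
    Finset.sum_nonneg fun i _ => sq_nonneg _
  have expand : ∑ i, ((X i - Xbar) ^ 2 - a * (X i - Xbar) - μ₂) ^ 2 =
      (∑ i, (X i - Xbar) ^ 4) - 2 * a * (∑ i, (X i - Xbar) ^ 3)
        + (a ^ 2 - 2 * μ₂) * (∑ i, (X i - Xbar) ^ 2)
        + 2 * a * μ₂ * (∑ i, (X i - Xbar)) + N * μ₂ ^ 2 := by
    rw [Finset.sum_congr rfl (fun i _ => show ((X i - Xbar) ^ 2 - a * (X i - Xbar) - μ₂) ^ 2 =
      (X i - Xbar) ^ 4 - 2 * a * (X i - Xbar) ^ 3 + (a ^ 2 - 2 * μ₂) * (X i - Xbar) ^ 2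
        + 2 * a * μ₂ * (X i - Xbar) + μ₂ ^ 2 from by ring)]
    simp only [Finset.sum_add_distrib, Finset.sum_sub_distrib, ← Finset.mul_sum,
      Finset.sum_const, Finset.card_fin, nsmul_eq_mul]
  rw [expand, hsum0, hS2, hS3, hS4] at key
  have hkey : μ₃ ^ 2 / μ₂ + μ₂ ^ 2 ≤ μ₄ := by
    have ha2 : a ^ 2 = μ₃ ^ 2 / μ₂ ^ 2 := by rw [ha]; ring
    have haμ : a * μ₃ = μ₃ ^ 2 / μ₂ := by rw [ha]; ring
    rw [ha2] at key
    have h1 : 0 ≤ μ₄ - 2 * a * μ₃ + (μ₃ ^ 2 / μ₂ ^ 2 - 2 * μ₂) * μ₂ + μ₂ ^ 2 := by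
      nlinarith [key]
    rw [ha] at h1
    rw [div_add' _ _ _ hpos.ne', div_le_iff₀ hpos]
    field_simp at h1
    nlinarith [h1, hpos, mul_pos hpos hpos]
  have heq : μ₃ ^ 2 / μ₂ ^ 3 + 1 = (μ₃ ^ 2 / μ₂ + μ₂ ^ 2) / μ₂ ^ 2 := by
    field_simp
  rw [heq]
  gcongr
end
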